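/- With the same setup (X = {xⁿ = y^{n+1}} ⊆ ℂ², b = n/(n+1), f : S¹ → X ∩ S³ a λ-bi-Lipschitz homeomorphism with inverse g), the map G : X ∩ B̄ → ℂ defined by G(t·x, t^b·y) = t·g(x,y) for (x,y) ∈ X ∩ S³ and t ∈ [0,1] is Lipschitz with constant (λ+1)(1+√2). -/

import Mathlib

open Set Metric

/-- A point `(a, b)` of Euclidean `ℂ²`. -/
noncomputable def pt2 (a b : ℂ) : EuclideanSpace ℂ (Fin 2) := WithLp.toLp 2 ![a, b]

-- uniqueness of radius on the curve ∩ sphere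
lemma unique_r (n : ℕ) (hn : 1 ≤ n) (r₁ q₁ r₂ q₂ : ℝ)
    (hr₁ : 0 ≤ r₁) (hq₁ : 0 ≤ q₁) (hr₂ : 0 ≤ r₂) (hq₂ : 0 ≤ q₂)
    (h₁ : q₁^(n+1) = r₁^n) (h₂ : q₂^(n+1) = r₂^n)
    (e₁ : r₁^2 + q₁^2 = 1) (e₂ : r₂^2 + q₂^2 = 1) : r₁ = r₂ := by
  rcases lt_trichotomy r₁ r₂ with h | h | h
  · exfalso
    have hrn : r₁^n < r₂^n := pow_lt_pow_left₀ h hr₁ (by omega)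
    have hqn : q₁^(n+1) < q₂^(n+1) := by rw [h₁, h₂]; exact hrn
    have hq : q₁ < q₂ := by
      by_contra hc; push_neg at hc
      exact absurd (pow_le_pow_left₀ hq₂ hc (n+1)) (not_le.mpr hqn)
    nlinarith
  · exact h
  · exfalso
    have hrn : r₂^n < r₁^n := pow_lt_pow_left₀ h hr₂ (by omega)
    have hqn : q₂^(n+1) < q₁^(n+1) := by rw [h₁, h₂]; exact hrn
    have hq : q₂ < q₁ := by
      by_contra hc; push_neg at hc
      exact absurd (pow_le_pow_left₀ hq₁ hc (n+1)) (not_le.mpr hqn)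
    nlinarith

lemma r_bound (n : ℕ) (hn : 1 ≤ n) (r q : ℝ) (hr : 0 ≤ r) (hq : 0 ≤ q)
    (h : q^(n+1) = r^n) (e : r^2 + q^2 = 1) : 1/2 ≤ r := by
  obtain ⟨m, rfl⟩ : ∃ m, n = m + 1 := ⟨n - 1, by omega⟩
  have hq1 : q ≤ 1 := by nlinarith
  have hrq : r ≤ q := by
    by_contra hc; push_neg at hc
    have h1 : q^(m+2) ≤ q^(m+1) := pow_le_pow_of_le_one hq hq1 (by omega)
    have h2 : q^(m+1) < r^(m+1) := pow_lt_pow_left₀ hc hq (by omega)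
    nlinarith [h.symm.le]
  have hq0 : 0 < q := by
    rcases hq.lt_or_eq with h' | h'
    · exact h'
    · exfalso; have : r ≤ 0 := le_trans hrq h'.symm.le; nlinarith
  have hqm : 0 < q^m := pow_pos hq0 m
  have key : q^2 ≤ r := by
    have h1 : r^(m+1) ≤ r * q^m := by
      have := pow_le_pow_left₀ hr hrq m
      calc r^(m+1) = r * r^m := by ring
        _ ≤ r * q^m := by nlinarith
    have h2 : q^(m+2) = q^2 * q^m := by ring
    have := h  -- q^(m+2) = r^(m+1)
    nlinarith
  nlinarith

-- the key quadratic estimate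
lemma keyT (t s tb sb c d Rx R K : ℝ) (ht0 : 0 ≤ t) (hts : t ≤ s)
    (hK : 1 ≤ K) (htbsb : t*s ≤ tb*sb)
    (hRx : Rx ≤ c^2) (hR : R ≤ d^2) :
    t^2*((2*c^2 - 2*Rx) + (2*d^2 - 2*R)) ≤
      K * ((t^2*c^2 + s^2*c^2 - 2*(t*s)*Rx) + (tb^2*d^2 + sb^2*d^2 - 2*(tb*sb)*R)) := by
  have hts0 : 0 ≤ t*s := mul_nonneg ht0 (ht0.trans hts)
  have ht2 : t^2 ≤ t*s := by nlinarith
  have h1 : 0 ≤ (c^2 - Rx) * (2*K*(t*s) - 2*t^2) := by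
    apply mul_nonneg (by linarith)
    nlinarith [mul_nonneg (sub_nonneg.mpr hK) hts0]
  have h2 : 0 ≤ (d^2 - R) * (2*K*(tb*sb) - 2*t^2) := by
    apply mul_nonneg (by linarith)
    nlinarith [mul_nonneg (sub_nonneg.mpr hK) (hts0.trans htbsb)]
  nlinarith [mul_nonneg (mul_nonneg (by linarith : (0:ℝ) ≤ K) (sq_nonneg c)) (sq_nonneg (s-t)),
    mul_nonneg (mul_nonneg (by linarith : (0:ℝ) ≤ K) (sq_nonneg d)) (sq_nonneg (sb-tb))]

lemma rpow_self_le (t b : ℝ) (ht0 : 0 ≤ t) (ht1 : t ≤ 1) (hb0 : 0 < b) (hb1 : b ≤ 1) :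
    t ≤ t ^ b := by
  rcases ht0.lt_or_eq with h | h
  · calc t = t ^ (1:ℝ) := (Real.rpow_one t).symm
      _ ≤ t ^ b := Real.rpow_le_rpow_of_exponent_ge h ht1 hb1
  · rw [← h, Real.zero_rpow hb0.ne']

lemma pt2_sub (a b a' b' : ℂ) : pt2 a b - pt2 a' b' = pt2 (a-a') (b-b') := by
  ext i; fin_cases i <;> simp [pt2]
lemma norm_pt2_sq (a b : ℂ) : ‖pt2 a b‖^2 = ‖a‖^2 + ‖b‖^2 := by
  rw [EuclideanSpace.norm_eq, Real.sq_sqrt (by positivity)]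
  simp [pt2, Fin.sum_univ_two]
lemma norm_sub_sq_c (z w : ℂ) : ‖z - w‖^2 = ‖z‖^2 + ‖w‖^2 - 2*(z * (starRingEnd ℂ) w).re := by
  rw [Complex.sq_norm,
    Complex.sq_norm, Complex.sq_norm, Complex.normSq_sub]
lemma re_mul_conj_le (z w : ℂ) : (z * (starRingEnd ℂ) w).re ≤ ‖z‖*‖w‖ :=
  (Complex.re_le_norm _).trans (by rw [norm_mul]; simp)

set_option maxHeartbeats 4000000 in
lemma main_ineq (n : ℕ) (hn : 1 < n) (f₁ f₂ : ℂ → ℂ) (g : EuclideanSpace ℂ (Fin 2) → ℂ)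
    (lam : ℝ) (hlam : 1 ≤ lam)
    (hbij : Set.BijOn (fun v => pt2 (f₁ v) (f₂ v)) (Metric.sphere (0:ℂ) 1)
      ({p : EuclideanSpace ℂ (Fin 2) | (p 0) ^ n = (p 1) ^ (n + 1)} ∩
        Metric.sphere (0 : EuclideanSpace ℂ (Fin 2)) 1))
    (hbil : ∀ v₁ ∈ Metric.sphere (0:ℂ) 1, ∀ v₂ ∈ Metric.sphere (0:ℂ) 1,
      lam⁻¹ * ‖v₁ - v₂‖ ≤ ‖pt2 (f₁ v₁) (f₂ v₁) - pt2 (f₁ v₂) (f₂ v₂)‖ ∧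
      ‖pt2 (f₁ v₁) (f₂ v₁) - pt2 (f₁ v₂) (f₂ v₂)‖ ≤ lam * ‖v₁ - v₂‖)
    (hg : ∀ v ∈ Metric.sphere (0:ℂ) 1, g (pt2 (f₁ v) (f₂ v)) = v)
    (tb sb : ℝ) (x₁ y₁ x₂ y₂ : ℂ) (t s : ℝ)
    (h₁ : pt2 x₁ y₁ ∈ {p : EuclideanSpace ℂ (Fin 2) | (p 0) ^ n = (p 1) ^ (n + 1)})
    (hn₁ : ‖pt2 x₁ y₁‖ = 1)
    (h₂ : pt2 x₂ y₂ ∈ {p : EuclideanSpace ℂ (Fin 2) | (p 0) ^ n = (p 1) ^ (n + 1)})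
    (hn₂ : ‖pt2 x₂ y₂‖ = 1)
    (ht0 : 0 ≤ t) (hts : t ≤ s)
    (httb : t ≤ tb) (hssb : s ≤ sb) (htb0 : 0 ≤ tb) (hsb0 : 0 ≤ sb) :
    ‖t • g (pt2 x₁ y₁) - s • g (pt2 x₂ y₂)‖ ≤
      (lam + 1) * (1 + Real.sqrt 2) *
        ‖pt2 ((t : ℂ) * x₁) ((tb : ℂ) * y₁) - pt2 ((s : ℂ) * x₂) ((sb : ℂ) * y₂)‖ := by
  have hlam0 : (0:ℝ) < lam := lt_of_lt_of_le one_pos hlam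
  have hs0 : 0 ≤ s := ht0.trans hts
  -- membership
  have hp₁ : pt2 x₁ y₁ ∈ ({p : EuclideanSpace ℂ (Fin 2) | (p 0)^n = (p 1)^(n+1)} ∩
      Metric.sphere (0 : EuclideanSpace ℂ (Fin 2)) 1) :=
    ⟨h₁, mem_sphere_zero_iff_norm.mpr hn₁⟩
  have hp₂ : pt2 x₂ y₂ ∈ ({p : EuclideanSpace ℂ (Fin 2) | (p 0)^n = (p 1)^(n+1)} ∩
      Metric.sphere (0 : EuclideanSpace ℂ (Fin 2)) 1) :=
    ⟨h₂, mem_sphere_zero_iff_norm.mpr hn₂⟩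
  obtain ⟨v₁, hv₁, hFv₁⟩ := hbij.surjOn hp₁
  obtain ⟨v₂, hv₂, hFv₂⟩ := hbij.surjOn hp₂
  simp only at hFv₁ hFv₂
  have hgp₁ : g (pt2 x₁ y₁) = v₁ := by rw [← hFv₁, hg v₁ hv₁]
  have hgp₂ : g (pt2 x₂ y₂) = v₂ := by rw [← hFv₂, hg v₂ hv₂]
  have hnv₂ : ‖v₂‖ = 1 := mem_sphere_zero_iff_norm.mp hv₂
  -- bi-Lipschitz
  have hlip : ‖v₁ - v₂‖ ≤ lam * ‖pt2 x₁ y₁ - pt2 x₂ y₂‖ := by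
    have h := (hbil v₁ hv₁ v₂ hv₂).1
    rw [hFv₁, hFv₂] at h
    calc ‖v₁ - v₂‖ = lam * (lam⁻¹ * ‖v₁ - v₂‖) := by field_simp
      _ ≤ lam * ‖pt2 x₁ y₁ - pt2 x₂ y₂‖ := mul_le_mul_of_nonneg_left h hlam0.le
  -- geometry on the curve: radii
  have hc₁ : x₁^n = y₁^(n+1) := by simpa [pt2, Set.mem_setOf_eq] using h₁
  have hc₂ : x₂^n = y₂^(n+1) := by simpa [pt2, Set.mem_setOf_eq] using h₂
  have hq₁ : ‖y₁‖^(n+1) = ‖x₁‖^n := by rw [← norm_pow, ← norm_pow, hc₁]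
  have hq₂ : ‖y₂‖^(n+1) = ‖x₂‖^n := by rw [← norm_pow, ← norm_pow, hc₂]
  have he₁ : ‖x₁‖^2 + ‖y₁‖^2 = 1 := by
    have h := norm_pt2_sq x₁ y₁; rw [hn₁] at h; linarith [h.symm]
  have he₂ : ‖x₂‖^2 + ‖y₂‖^2 = 1 := by
    have h := norm_pt2_sq x₂ y₂; rw [hn₂] at h; linarith [h.symm]
  have hcx₂ : ‖x₂‖ = ‖x₁‖ := unique_r n hn.le ‖x₂‖ ‖y₂‖ ‖x₁‖ ‖y₁‖ (norm_nonneg _)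
    (norm_nonneg _) (norm_nonneg _) (norm_nonneg _) hq₂ hq₁ he₂ he₁
  have hdy₂ : ‖y₂‖ = ‖y₁‖ := by
    have hx2 : ‖x₂‖^2 = ‖x₁‖^2 := by rw [hcx₂]
    have h2 : ‖y₂‖^2 = ‖y₁‖^2 := by linarith
    rw [← Real.sqrt_sq (norm_nonneg y₂), ← Real.sqrt_sq (norm_nonneg y₁), h2]
  have hchalf : 1/2 ≤ ‖x₁‖ :=
    r_bound n hn.le ‖x₁‖ ‖y₁‖ (norm_nonneg _) (norm_nonneg _) hq₁ he₁
  -- expansions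
  have hRx : (x₁ * (starRingEnd ℂ) x₂).re ≤ ‖x₁‖^2 := by
    have h := re_mul_conj_le x₁ x₂; rw [hcx₂] at h; nlinarith
  have hR : (y₁ * (starRingEnd ℂ) y₂).re ≤ ‖y₁‖^2 := by
    have h := re_mul_conj_le y₁ y₂; rw [hdy₂] at h; nlinarith
  have hD0 : (0:ℝ) ≤ ‖pt2 ((t:ℂ)*x₁) ((tb:ℂ)*y₁) - pt2 ((s:ℂ)*x₂) ((sb:ℂ)*y₂)‖ :=
    norm_nonneg _
  have hnx : ‖(t:ℂ) * x₁ - (s:ℂ) * x₂‖^2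
      = t^2*‖x₁‖^2 + s^2*‖x₁‖^2 - 2*(t*s)*(x₁ * (starRingEnd ℂ) x₂).re := by
    rw [norm_sub_sq_c]
    have e1 : ((t:ℂ)*x₁) * (starRingEnd ℂ) ((s:ℂ)*x₂)
        = ((t*s : ℝ) : ℂ) * (x₁ * (starRingEnd ℂ) x₂) := by
      simp only [map_mul, Complex.conj_ofReal]; push_cast; ring
    rw [e1, Complex.re_ofReal_mul]
    simp only [norm_mul, Complex.norm_real]
    rw [Real.norm_of_nonneg ht0, Real.norm_of_nonneg hs0, hcx₂]
    ring
  have hny : ‖(tb:ℂ) * y₁ - (sb:ℂ) * y₂‖^2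
      = tb^2*‖y₁‖^2 + sb^2*‖y₁‖^2 - 2*(tb*sb)*(y₁ * (starRingEnd ℂ) y₂).re := by
    rw [norm_sub_sq_c]
    have e1 : ((tb:ℂ)*y₁) * (starRingEnd ℂ) ((sb:ℂ)*y₂)
        = ((tb*sb : ℝ) : ℂ) * (y₁ * (starRingEnd ℂ) y₂) := by
      simp only [map_mul, Complex.conj_ofReal]; push_cast; ring
    rw [e1, Complex.re_ofReal_mul]
    simp only [norm_mul, Complex.norm_real]
    rw [Real.norm_of_nonneg htb0, Real.norm_of_nonneg hsb0, hdy₂]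
    ring
  have hD2 : ‖pt2 ((t:ℂ)*x₁) ((tb:ℂ)*y₁) - pt2 ((s:ℂ)*x₂) ((sb:ℂ)*y₂)‖^2
      = (t^2*‖x₁‖^2 + s^2*‖x₁‖^2 - 2*(t*s)*(x₁ * (starRingEnd ℂ) x₂).re)
        + (tb^2*‖y₁‖^2 + sb^2*‖y₁‖^2 - 2*(tb*sb)*(y₁ * (starRingEnd ℂ) y₂).re) := by
    rw [pt2_sub, norm_pt2_sq, hnx, hny]
  have hP2 : ‖pt2 x₁ y₁ - pt2 x₂ y₂‖^2
      = (2*‖x₁‖^2 - 2*(x₁ * (starRingEnd ℂ) x₂).re)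
        + (2*‖y₁‖^2 - 2*(y₁ * (starRingEnd ℂ) y₂).re) := by
    rw [pt2_sub, norm_pt2_sq, norm_sub_sq_c, norm_sub_sq_c, hcx₂, hdy₂]
    ring
  -- √2 facts
  have hs2 : (1:ℝ) ≤ Real.sqrt 2 := by
    rw [show (1:ℝ) = Real.sqrt 1 by simp]
    exact Real.sqrt_le_sqrt (by norm_num)
  have hKsq : (1 + Real.sqrt 2)^2 = 3 + 2*Real.sqrt 2 := by
    have h := Real.sq_sqrt (by norm_num : (2:ℝ) ≥ 0)
    nlinarith [h]
  -- step 4 : t * ‖p₁ - p₂‖ ≤ (1+√2) * D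
  have hT : t * ‖pt2 x₁ y₁ - pt2 x₂ y₂‖
      ≤ (1 + Real.sqrt 2) * ‖pt2 ((t:ℂ)*x₁) ((tb:ℂ)*y₁) - pt2 ((s:ℂ)*x₂) ((sb:ℂ)*y₂)‖ := by
    have hTsq : (t * ‖pt2 x₁ y₁ - pt2 x₂ y₂‖)^2
        ≤ ((1 + Real.sqrt 2) * ‖pt2 ((t:ℂ)*x₁) ((tb:ℂ)*y₁) - pt2 ((s:ℂ)*x₂) ((sb:ℂ)*y₂)‖
            : ℝ)^2 := by
      rw [mul_pow, mul_pow, hP2, hD2, hKsq]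
      exact keyT t s tb sb ‖x₁‖ ‖y₁‖ (x₁ * (starRingEnd ℂ) x₂).re
        (y₁ * (starRingEnd ℂ) y₂).re (3 + 2*Real.sqrt 2) ht0 hts (by linarith)
        (mul_le_mul httb hssb hs0 htb0) hRx hR
    exact le_of_pow_le_pow_left₀ (by norm_num) (mul_nonneg (by linarith) hD0) hTsq
  -- step 5 : s - t ≤ (1+√2) * D
  have hDx : ‖(t:ℂ) * x₁ - (s:ℂ) * x₂‖
      ≤ ‖pt2 ((t:ℂ)*x₁) ((tb:ℂ)*y₁) - pt2 ((s:ℂ)*x₂) ((sb:ℂ)*y₂)‖ := by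
    apply le_of_pow_le_pow_left₀ (n := 2) (by norm_num) hD0
    rw [hnx, hD2]
    nlinarith [hny.symm.le, sq_nonneg ‖(tb:ℂ) * y₁ - (sb:ℂ) * y₂‖]
  have hst : s - t ≤ (1 + Real.sqrt 2)
      * ‖pt2 ((t:ℂ)*x₁) ((tb:ℂ)*y₁) - pt2 ((s:ℂ)*x₂) ((sb:ℂ)*y₂)‖ := by
    have h1 : s*‖x₁‖ - t*‖x₁‖ ≤ ‖(t:ℂ) * x₁ - (s:ℂ) * x₂‖ := by
      calc s*‖x₁‖ - t*‖x₁‖ = ‖(s:ℂ) * x₂‖ - ‖(t:ℂ) * x₁‖ := by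
            simp only [norm_mul, Complex.norm_real]
            rw [Real.norm_of_nonneg ht0, Real.norm_of_nonneg hs0, hcx₂]
        _ ≤ ‖(s:ℂ) * x₂ - (t:ℂ) * x₁‖ := norm_sub_norm_le _ _
        _ = ‖(t:ℂ) * x₁ - (s:ℂ) * x₂‖ := norm_sub_rev _ _
    nlinarith [h1.trans hDx]
  -- combine
  rw [hgp₁, hgp₂]
  set P := ‖pt2 x₁ y₁ - pt2 x₂ y₂‖ with hPdef
  set D := ‖pt2 ((t:ℂ)*x₁) ((tb:ℂ)*y₁) - pt2 ((s:ℂ)*x₂) ((sb:ℂ)*y₂)‖ with hDdef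
  clear_value P D
  have hP0 : 0 ≤ P := by rw [hPdef]; exact norm_nonneg _
  have hsplit : t • v₁ - s • v₂ = t • (v₁ - v₂) - (s - t) • v₂ := by
    rw [smul_sub, sub_smul]; abel
  have hstep : ‖t • v₁ - s • v₂‖ ≤ t * ‖v₁ - v₂‖ + (s - t) := by
    rw [hsplit]
    refine (norm_sub_le _ _).trans ?_
    rw [norm_smul, norm_smul, hnv₂, Real.norm_of_nonneg ht0,
      Real.norm_of_nonneg (by linarith : (0:ℝ) ≤ s - t)]
    ring_nf; rfl
  have h2 : t * ‖v₁ - v₂‖ ≤ lam * (t * P) := by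
    have := mul_le_mul_of_nonneg_left hlip ht0
    nlinarith
  have h3 : lam * (t * P) ≤ lam * ((1 + Real.sqrt 2) * D) :=
    mul_le_mul_of_nonneg_left hT hlam0.le
  calc ‖t • v₁ - s • v₂‖ ≤ t * ‖v₁ - v₂‖ + (s - t) := hstep
    _ ≤ lam * ((1 + Real.sqrt 2) * D) + (1 + Real.sqrt 2) * D := by linarith
    _ = (lam + 1) * (1 + Real.sqrt 2) * D := by ring

/-- With `X = {xⁿ = y^{n+1}} ⊆ ℂ²`, `b = n/(n+1)`, and `f = (f₁,f₂) : S¹ → X ∩ S³` a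
λ-bi-Lipschitz homeomorphism with inverse `g`, the map `G(t·x, t^b·y) = t·g(x,y)`
(for `(x,y) ∈ X ∩ S³`, `t ∈ [0,1]`) is Lipschitz with constant `(λ+1)(1+√2)`. -/
theorem stmt_12 (n : ℕ) (hn : 1 < n) (f₁ f₂ : ℂ → ℂ) (g : EuclideanSpace ℂ (Fin 2) → ℂ)
    (lam : ℝ) (hlam : 1 ≤ lam)
    (hbij : Set.BijOn (fun v => pt2 (f₁ v) (f₂ v)) (Metric.sphere (0:ℂ) 1)
      ({p : EuclideanSpace ℂ (Fin 2) | (p 0) ^ n = (p 1) ^ (n + 1)} ∩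
        Metric.sphere (0 : EuclideanSpace ℂ (Fin 2)) 1))
    (hbil : ∀ v₁ ∈ Metric.sphere (0:ℂ) 1, ∀ v₂ ∈ Metric.sphere (0:ℂ) 1,
      lam⁻¹ * ‖v₁ - v₂‖ ≤ ‖pt2 (f₁ v₁) (f₂ v₁) - pt2 (f₁ v₂) (f₂ v₂)‖ ∧
      ‖pt2 (f₁ v₁) (f₂ v₁) - pt2 (f₁ v₂) (f₂ v₂)‖ ≤ lam * ‖v₁ - v₂‖)
    (hg : ∀ v ∈ Metric.sphere (0:ℂ) 1, g (pt2 (f₁ v) (f₂ v)) = v)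
    (hg' : ∀ p ∈ {p : EuclideanSpace ℂ (Fin 2) | (p 0) ^ n = (p 1) ^ (n + 1)} ∩
        Metric.sphere (0 : EuclideanSpace ℂ (Fin 2)) 1, pt2 (f₁ (g p)) (f₂ (g p)) = p) :
    let b : ℝ := n / (n + 1)
    ∀ x₁ y₁ x₂ y₂ : ℂ, ∀ t s : ℝ,
      pt2 x₁ y₁ ∈ {p : EuclideanSpace ℂ (Fin 2) | (p 0) ^ n = (p 1) ^ (n + 1)} →
      ‖pt2 x₁ y₁‖ = 1 →
      pt2 x₂ y₂ ∈ {p : EuclideanSpace ℂ (Fin 2) | (p 0) ^ n = (p 1) ^ (n + 1)} →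
      ‖pt2 x₂ y₂‖ = 1 →
      0 ≤ t → t ≤ 1 → 0 ≤ s → s ≤ 1 →
      ‖t • g (pt2 x₁ y₁) - s • g (pt2 x₂ y₂)‖ ≤
        (lam + 1) * (1 + Real.sqrt 2) *
          ‖pt2 ((t : ℂ) * x₁) (((t ^ b : ℝ) : ℂ) * y₁) -
            pt2 ((s : ℂ) * x₂) (((s ^ b : ℝ) : ℂ) * y₂)‖ := by
  intro b x₁ y₁ x₂ y₂ t s h₁ hn₁ h₂ hn₂ ht0 ht1 hs0 hs1
  have hb : b = (n:ℝ)/((n:ℝ)+1) := rfl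
  have hn' : (1:ℝ) ≤ (n:ℝ) := by exact_mod_cast hn.le
  have hb0 : 0 < b := by rw [hb]; apply div_pos <;> linarith
  have hb1 : b ≤ 1 := by rw [hb, div_le_one (by linarith)]; linarith
  have htb : t ≤ t ^ b := rpow_self_le t b ht0 ht1 hb0 hb1
  have hsb : s ≤ s ^ b := rpow_self_le s b hs0 hs1 hb0 hb1
  have htb0 : 0 ≤ t ^ b := Real.rpow_nonneg ht0 b
  have hsb0 : 0 ≤ s ^ b := Real.rpow_nonneg hs0 b
  rcases le_total t s with h | h
  · exact main_ineq n hn f₁ f₂ g lam hlam hbij hbil hg (t ^ b) (s ^ b) x₁ y₁ x₂ y₂ t s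
      h₁ hn₁ h₂ hn₂ ht0 h htb hsb htb0 hsb0
  · rw [norm_sub_rev (t • g (pt2 x₁ y₁)),
      norm_sub_rev (pt2 ((t : ℂ) * x₁) (((t ^ b : ℝ) : ℂ) * y₁))]
    exact main_ineq n hn f₁ f₂ g lam hlam hbij hbil hg (s ^ b) (t ^ b) x₂ y₂ x₁ y₁ s t
      h₂ hn₂ h₁ hn₁ hs0 h hsb htb hsb0 htb0
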